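/- A sequence (A_m)_{m∈ℕ} ⊆ B(X) admits a strong nonuniform polynomial dichotomy if and only if it admits a polynomial dichotomy with respect to some sequence of norms ‖·‖_m satisfying both ‖x‖ ≤ ‖x‖_m ≤ C m^ε ‖x‖ (for some C > 0, ε ≥ 0) and the uniform polynomial growth bound ‖A(m,n)x‖_m ≤ M(m/n)^a ‖x‖_n for all m ≥ n (for some M, a > 0). -/

import Mathlib

open scoped BigOperators

variable {X : Type*} [NormedAddCommGroup X] [NormedSpace ℝ X]

/-- The cocycle generated by a sequence of bounded operators:
`coc A n m = 𝓐(m,n) = A_{m-1} ⋯ A_n` for `m > n`, and `= Id` for `m ≤ n`. -/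
def coc (A : ℕ → X →L[ℝ] X) (n : ℕ) : ℕ → X →L[ℝ] X
  | 0 => 1
  | m + 1 => if n ≤ m then (A m).comp (coc A n m) else 1

/-- The formal difference operator: `(T x)_1 = 0` and
`(T x)_{m+1} = (m+1)(x_{m+1} - A_m x_m)` for `m ≥ 1`. -/
noncomputable def TOp (A : ℕ → X →L[ℝ] X) (x : ℕ → X) : ℕ → X :=
  fun m => if m ≤ 1 then 0 else (m : ℝ) • (x m - A (m - 1) (x (m - 1)))

/-- `N` is a family (indexed by `m ≥ 1`) of norms on `X`, each equivalent to `‖·‖`. -/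
def NormFamily (N : ℕ → X → ℝ) : Prop :=
  ∀ m, 1 ≤ m →
    (∀ x y : X, N m (x + y) ≤ N m x + N m y) ∧
    (∀ (c : ℝ) (x : X), N m (c • x) = |c| * N m x) ∧
    (∃ c C : ℝ, 0 < c ∧ ∀ x : X, c * ‖x‖ ≤ N m x ∧ N m x ≤ C * ‖x‖)

/-- Membership in `Y`: `sup_{m ≥ 1} ‖x_m‖_m < ∞`. -/
def MemY (N : ℕ → X → ℝ) (x : ℕ → X) : Prop :=
  ∃ S : ℝ, ∀ m, 1 ≤ m → N m (x m) ≤ S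

/-- Membership in `Y₀ = Y_{{0}}`: bounded and `x_1 = 0`. -/
def MemY0 (N : ℕ → X → ℝ) (x : ℕ → X) : Prop := x 1 = 0 ∧ MemY N x

/-- Membership in `Y_Z`: bounded and `x_1 ∈ Z`. -/
def MemYZ (N : ℕ → X → ℝ) (Z : Set X) (x : ℕ → X) : Prop := x 1 ∈ Z ∧ MemY N x

/-- Membership in the domain `𝒟(T_Z)`: `x ∈ Y_Z` and
`sup_{m ≥ 1} (m+1)‖x_{m+1} - A_m x_m‖_{m+1} < ∞`. -/
def MemD (A : ℕ → X →L[ℝ] X) (N : ℕ → X → ℝ) (Z : Set X) (x : ℕ → X) : Prop :=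
  MemYZ N Z x ∧ MemY N (TOp A x)

/-- Polynomial dichotomy (with given projections and constants) with respect to the
sequence of norms `N`.  The bound along the unstable direction is stated in the
equivalent "forward" form: `‖u‖_m ≤ D (m/n)^λ ‖𝓐(n,m)u‖_n` for `u ∈ Ker P_m`, `m ≤ n`. -/
def PolyDichWith (A : ℕ → X →L[ℝ] X) (N : ℕ → X → ℝ) (P : ℕ → X →L[ℝ] X)
    (D lam : ℝ) : Prop :=
  (∀ m, 1 ≤ m → (P m).comp (P m) = P m) ∧
  (∀ m, 1 ≤ m → (A m).comp (P m) = (P (m + 1)).comp (A m)) ∧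
  (∀ m, 1 ≤ m → ∀ y, P (m + 1) y = 0 → ∃! x, P m x = 0 ∧ A m x = y) ∧
  (∀ m n, 1 ≤ n → n ≤ m → ∀ x : X,
      N m (coc A n m (P n x)) ≤ D * (((m : ℝ) / (n : ℝ)) ^ (-lam)) * N n x) ∧
  (∀ m n, 1 ≤ m → m ≤ n → ∀ u : X, P m u = 0 →
      N m u ≤ D * (((m : ℝ) / (n : ℝ)) ^ lam) * N n (coc A m n u))

/-- `(A_m)` admits a polynomial dichotomy with respect to the sequence of norms `N`. -/
def PolyDich (A : ℕ → X →L[ℝ] X) (N : ℕ → X → ℝ) : Prop :=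
  ∃ (P : ℕ → X →L[ℝ] X) (D lam : ℝ), 0 < D ∧ 0 < lam ∧ PolyDichWith A N P D lam

/-- Nonuniform polynomial dichotomy with given projections and constants `D, λ, ε`.
The unstable bound `‖𝓐(m,n)Q_n‖ ≤ D(n/m)^{-λ}n^ε` (`m ≤ n`) is stated in the equivalent
form: if `u ∈ Ker P_m` and `𝓐(n,m)u = Q_n x`, then `‖u‖ ≤ D(m/n)^λ n^ε ‖x‖`. -/
def NUPDWith (A : ℕ → X →L[ℝ] X) (P : ℕ → X →L[ℝ] X) (D lam ε : ℝ) : Prop :=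
  (∀ m, 1 ≤ m → (P m).comp (P m) = P m) ∧
  (∀ m, 1 ≤ m → (A m).comp (P m) = (P (m + 1)).comp (A m)) ∧
  (∀ m, 1 ≤ m → ∀ y, P (m + 1) y = 0 → ∃! x, P m x = 0 ∧ A m x = y) ∧
  (∀ m n, 1 ≤ n → n ≤ m → ∀ x : X,
      ‖coc A n m (P n x)‖ ≤ D * (((m : ℝ) / (n : ℝ)) ^ (-lam)) * ((n : ℝ) ^ ε) * ‖x‖) ∧
  (∀ m n, 1 ≤ m → m ≤ n → ∀ u x : X, P m u = 0 → coc A m n u = x - P n x →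
      ‖u‖ ≤ D * (((m : ℝ) / (n : ℝ)) ^ lam) * ((n : ℝ) ^ ε) * ‖x‖)

/-- `(A_m)` admits a nonuniform polynomial dichotomy. -/
def NUPD (A : ℕ → X →L[ℝ] X) : Prop :=
  ∃ (P : ℕ → X →L[ℝ] X) (D lam ε : ℝ),
    0 < D ∧ 0 < lam ∧ 0 ≤ ε ∧ NUPDWith A P D lam ε

/-- `(A_m)` admits a strong nonuniform polynomial dichotomy: a nonuniform polynomial
dichotomy together with the growth bound `‖𝓐(m,n)‖ ≤ K(m/n)^b n^ε` for `m ≥ n`,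
with the same `ε`. -/
def SNUPD (A : ℕ → X →L[ℝ] X) : Prop :=
  ∃ (P : ℕ → X →L[ℝ] X) (D lam ε K b : ℝ),
    0 < D ∧ 0 < lam ∧ 0 ≤ ε ∧ 0 < K ∧ 0 < b ∧ NUPDWith A P D lam ε ∧
    ∀ m n, 1 ≤ n → n ≤ m → ∀ x : X,
      ‖coc A n m x‖ ≤ K * (((m : ℝ) / (n : ℝ)) ^ b) * ((n : ℝ) ^ ε) * ‖x‖

/-- A family of norms `‖·‖_m` with `‖x‖ ≤ ‖x‖_m ≤ C m^ε ‖x‖`. -/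
def AdaptedNorms (N : ℕ → X → ℝ) (C ε : ℝ) : Prop :=
  ∀ m, 1 ≤ m →
    (∀ x y : X, N m (x + y) ≤ N m x + N m y) ∧
    (∀ (c : ℝ) (x : X), N m (c • x) = |c| * N m x) ∧
    ∀ x : X, ‖x‖ ≤ N m x ∧ N m x ≤ C * ((m : ℝ) ^ ε) * ‖x‖

/-- The uniform polynomial growth bound `‖𝓐(m,n)x‖_m ≤ M (m/n)^a ‖x‖_n` for `m ≥ n`. -/
def Grow (A : ℕ → X →L[ℝ] X) (N : ℕ → X → ℝ) (M a : ℝ) : Prop :=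
  ∀ m n, 1 ≤ n → n ≤ m → ∀ x : X,
    N m (coc A n m x) ≤ M * (((m : ℝ) / (n : ℝ)) ^ a) * N n x

lemma coc_self_apply (A : ℕ → X →L[ℝ] X) (n : ℕ) (x : X) : coc A n n x = x := by
  cases n with
  | zero => rfl
  | succ k => simp [coc]

lemma coc_succ_apply (A : ℕ → X →L[ℝ] X) {n m : ℕ} (h : n ≤ m) (x : X) :
    coc A n (m + 1) x = A m (coc A n m x) := by
  simp [coc, h]

lemma coc_coc (A : ℕ → X →L[ℝ] X) {n k m : ℕ} (hnk : n ≤ k) (hkm : k ≤ m) (x : X) :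
    coc A k m (coc A n k x) = coc A n m x := by
  induction m, hkm using Nat.le_induction with
  | base => rw [coc_self_apply]
  | succ m hm ih =>
      rw [coc_succ_apply A hm, coc_succ_apply A (hnk.trans hm), ih]

lemma P_coc {A P : ℕ → X →L[ℝ] X}
    (hC : ∀ j, 1 ≤ j → ∀ x : X, A j (P j x) = P (j + 1) (A j x))
    {n m : ℕ} (h1 : 1 ≤ n) (hnm : n ≤ m) (x : X) :
    P m (coc A n m x) = coc A n m (P n x) := by
  induction m, hnm using Nat.le_induction with
  | base => rw [coc_self_apply, coc_self_apply]
  | succ m hm ih =>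
      rw [coc_succ_apply A hm, coc_succ_apply A hm, ← hC m (h1.trans hm), ih]

lemma back_exu {A P : ℕ → X →L[ℝ] X}
    (hC : ∀ j, 1 ≤ j → ∀ x : X, A j (P j x) = P (j + 1) (A j x))
    (hI : ∀ j, 1 ≤ j → ∀ y : X, P (j + 1) y = 0 → ∃! x, P j x = 0 ∧ A j x = y)
    {m n : ℕ} (h1 : 1 ≤ m) (hmn : m ≤ n) :
    ∀ y : X, P n y = 0 → ∃! u, P m u = 0 ∧ coc A m n u = y := by
  induction n, hmn using Nat.le_induction with
  | base =>
      intro y hy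
      exact ⟨y, ⟨hy, coc_self_apply A m y⟩, fun u ⟨_, hu⟩ => by rwa [coc_self_apply] at hu⟩
  | succ n hn ih =>
      intro y hy
      obtain ⟨x, ⟨hx0, hxy⟩, hxu⟩ := hI n (h1.trans hn) y hy
      obtain ⟨u, ⟨hu0, huc⟩, huu⟩ := ih x hx0
      refine ⟨u, ⟨hu0, ?_⟩, ?_⟩
      · rw [coc_succ_apply A hn, huc, hxy]
      · rintro u' ⟨h0', hc'⟩
        rw [coc_succ_apply A hn] at hc'
        have hx' : coc A m n u' = x := by
          refine hxu _ ⟨?_, hc'⟩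
          rw [P_coc hC h1 hn, h0', map_zero]
        exact huu u' ⟨h0', hx'⟩

open Classical in
noncomputable def gB (A P : ℕ → X →L[ℝ] X) (m n : ℕ) (y : X) : X :=
  if h : ∃ u, P m u = 0 ∧ coc A m n u = y then h.choose else 0

lemma gB_spec {A P : ℕ → X →L[ℝ] X} {m n : ℕ} {y : X}
    (hexu : ∃! u, P m u = 0 ∧ coc A m n u = y) :
    P m (gB A P m n y) = 0 ∧ coc A m n (gB A P m n y) = y := by
  have h : ∃ u, P m u = 0 ∧ coc A m n u = y := hexu.exists
  classical
  rw [gB, dif_pos h]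
  exact h.choose_spec

lemma gB_eq {A P : ℕ → X →L[ℝ] X} {m n : ℕ} {y : X}
    (hexu : ∃! u, P m u = 0 ∧ coc A m n u = y) {w : X}
    (hw : P m w = 0 ∧ coc A m n w = y) : w = gB A P m n y :=
  hexu.unique hw (gB_spec hexu)

-- numeric helpers
lemma nat_pos_real {n : ℕ} (hn : 1 ≤ n) : (0:ℝ) < n := by exact_mod_cast hn
lemma nat_one_le_real {n : ℕ} (hn : 1 ≤ n) : (1:ℝ) ≤ n := by exact_mod_cast hn
lemma div_pos_nat {m n : ℕ} (hm : 1 ≤ m) (hn : 1 ≤ n) : (0:ℝ) < (m:ℝ)/n :=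
  div_pos (nat_pos_real hm) (nat_pos_real hn)
lemma one_le_div_nat {m n : ℕ} (hn : 1 ≤ n) (h : n ≤ m) : (1:ℝ) ≤ (m:ℝ)/n := by
  rw [le_div_iff₀ (nat_pos_real hn), one_mul]
  exact_mod_cast h
lemma div_le_one_nat {m n : ℕ} (hn : 1 ≤ n) (h : m ≤ n) : (m:ℝ)/n ≤ 1 := by
  rw [div_le_one (nat_pos_real hn)]
  exact_mod_cast h

lemma rpow_neg_div {a b : ℝ} (ha : 0 ≤ a) (hb : 0 ≤ b) (l : ℝ) :
    (a / b) ^ (-l) = (b / a) ^ l := by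
  rw [Real.rpow_neg (div_nonneg ha hb), ← Real.inv_rpow (div_nonneg ha hb), inv_div]

lemma div_trans_eq {a b c : ℝ} (hb : b ≠ 0) : a / c = (a / b) * (b / c) := by
  rw [div_mul_div_comm, mul_comm a b, mul_div_mul_left _ _ hb]

lemma bdd_of_le {f : ℕ → ℝ} {B : ℝ} (h : ∀ m, f m ≤ B) : BddAbove (Set.range f) :=
  ⟨B, by rintro r ⟨m, rfl⟩; exact h m⟩

-- norm components
noncomputable def Sterm (A P : ℕ → X →L[ℝ] X) (l : ℝ) (n : ℕ) (x : X) (m : ℕ) : ℝ :=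
  if n ≤ m then ‖coc A n m (P n x)‖ * (((m:ℝ)/(n:ℝ)) ^ l) else 0
noncomputable def Mterm (A P : ℕ → X →L[ℝ] X) (l : ℝ) (n : ℕ) (x : X) (m : ℕ) : ℝ :=
  if 1 ≤ m ∧ m ≤ n then ‖gB A P m n (x - P n x)‖ * (((n:ℝ)/(m:ℝ)) ^ l) else 0
noncomputable def Wterm (A P : ℕ → X →L[ℝ] X) (b : ℝ) (n : ℕ) (x : X) (m : ℕ) : ℝ :=
  if n ≤ m then ‖coc A n m (x - P n x)‖ * (((m:ℝ)/(n:ℝ)) ^ (-b)) else 0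

noncomputable def Nnorm (A P : ℕ → X →L[ℝ] X) (l b : ℝ) (n : ℕ) (x : X) : ℝ :=
  (⨆ m, Sterm A P l n x m) + (⨆ m, Mterm A P l n x m) + (⨆ m, Wterm A P b n x m)

lemma Sterm_nonneg (A P : ℕ → X →L[ℝ] X) (l : ℝ) (n : ℕ) (x : X) (m : ℕ) :
    0 ≤ Sterm A P l n x m := by
  unfold Sterm; split <;> positivity
lemma Mterm_nonneg (A P : ℕ → X →L[ℝ] X) (l : ℝ) (n : ℕ) (x : X) (m : ℕ) :
    0 ≤ Mterm A P l n x m := by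
  unfold Mterm; split <;> positivity
lemma Wterm_nonneg (A P : ℕ → X →L[ℝ] X) (b : ℝ) (n : ℕ) (x : X) (m : ℕ) :
    0 ≤ Wterm A P b n x m := by
  unfold Wterm; split <;> positivity

section Bounds

variable {A P : ℕ → X →L[ℝ] X} {D l ε K b : ℝ}

lemma Sterm_le
    (hS1 : ∀ m n, 1 ≤ n → n ≤ m → ∀ x : X,
      ‖coc A n m (P n x)‖ ≤ D * (((m:ℝ)/(n:ℝ)) ^ (-l)) * ((n:ℝ) ^ ε) * ‖x‖)
    {n : ℕ} (hn : 1 ≤ n) (x : X) (m : ℕ) (hD : 0 ≤ D) (hε : 0 ≤ ε) :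
    Sterm A P l n x m ≤ D * ((n:ℝ) ^ ε) * ‖x‖ := by
  unfold Sterm
  split
  · rename_i h
    have hpos : (0:ℝ) < (m:ℝ)/n := div_pos_nat (hn.trans h) hn
    calc ‖coc A n m (P n x)‖ * (((m:ℝ)/(n:ℝ)) ^ l)
        ≤ (D * (((m:ℝ)/(n:ℝ)) ^ (-l)) * ((n:ℝ) ^ ε) * ‖x‖) * (((m:ℝ)/(n:ℝ)) ^ l) :=
          mul_le_mul_of_nonneg_right (hS1 m n hn h x) (Real.rpow_nonneg hpos.le l)
      _ = D * ((n:ℝ) ^ ε) * ‖x‖ * ((((m:ℝ)/(n:ℝ)) ^ (-l)) * (((m:ℝ)/(n:ℝ)) ^ l)) := by ring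
      _ = D * ((n:ℝ) ^ ε) * ‖x‖ := by
          rw [← Real.rpow_add hpos, neg_add_cancel, Real.rpow_zero, mul_one]
  · have h1 : (0:ℝ) < n := nat_pos_real hn
    positivity

lemma Mterm_le
    (hP1 : ∀ n, 1 ≤ n → ∀ x : X, P n (P n x) = P n x)
    (hC1 : ∀ j, 1 ≤ j → ∀ x : X, A j (P j x) = P (j + 1) (A j x))
    (hI : ∀ j, 1 ≤ j → ∀ y : X, P (j + 1) y = 0 → ∃! x, P j x = 0 ∧ A j x = y)
    (hU1 : ∀ m n, 1 ≤ m → m ≤ n → ∀ u x : X, P m u = 0 → coc A m n u = x - P n x →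
      ‖u‖ ≤ D * (((m:ℝ)/(n:ℝ)) ^ l) * ((n:ℝ) ^ ε) * ‖x‖)
    {n : ℕ} (hn : 1 ≤ n) (x : X) (m : ℕ) (hD : 0 ≤ D) (hε : 0 ≤ ε) :
    Mterm A P l n x m ≤ D * ((n:ℝ) ^ ε) * ‖x‖ := by
  unfold Mterm
  split
  · rename_i h
    obtain ⟨h1, h2⟩ := h
    have hq : P n (x - P n x) = 0 := by rw [map_sub, hP1 n hn, sub_self]
    have hexu := back_exu hC1 hI h1 h2 _ hq
    obtain ⟨hg0, hgc⟩ := gB_spec hexu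
    have hb := hU1 m n h1 h2 _ x hg0 hgc
    have hm0 : ((m:ℝ)) ≠ 0 := (nat_pos_real h1).ne'
    have hn0 : ((n:ℝ)) ≠ 0 := (nat_pos_real hn).ne'
    have hpos : (0:ℝ) < (m:ℝ)/n := div_pos_nat h1 hn
    have hpos' : (0:ℝ) < (n:ℝ)/m := div_pos_nat hn h1
    calc ‖gB A P m n (x - P n x)‖ * (((n:ℝ)/(m:ℝ)) ^ l)
        ≤ (D * (((m:ℝ)/(n:ℝ)) ^ l) * ((n:ℝ) ^ ε) * ‖x‖) * (((n:ℝ)/(m:ℝ)) ^ l) :=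
          mul_le_mul_of_nonneg_right hb (Real.rpow_nonneg hpos'.le l)
      _ = D * ((n:ℝ) ^ ε) * ‖x‖ * ((((m:ℝ)/(n:ℝ)) * ((n:ℝ)/(m:ℝ))) ^ l) := by
          rw [Real.mul_rpow hpos.le hpos'.le]; ring
      _ = D * ((n:ℝ) ^ ε) * ‖x‖ := by
          have : ((m:ℝ)/(n:ℝ)) * ((n:ℝ)/(m:ℝ)) = 1 := by field_simp
          rw [this, Real.one_rpow, mul_one]
  · have h1 : (0:ℝ) < n := nat_pos_real hn
    positivity

lemma norm_sub_P_le
    (hS1 : ∀ m n, 1 ≤ n → n ≤ m → ∀ x : X,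
      ‖coc A n m (P n x)‖ ≤ D * (((m:ℝ)/(n:ℝ)) ^ (-l)) * ((n:ℝ) ^ ε) * ‖x‖)
    {n : ℕ} (hn : 1 ≤ n) (x : X) :
    ‖P n x‖ ≤ D * ((n:ℝ) ^ ε) * ‖x‖ := by
  have := hS1 n n hn le_rfl x
  rwa [coc_self_apply, div_self (nat_pos_real hn).ne', Real.one_rpow, mul_one] at this

lemma Wterm_le
    (hS1 : ∀ m n, 1 ≤ n → n ≤ m → ∀ x : X,
      ‖coc A n m (P n x)‖ ≤ D * (((m:ℝ)/(n:ℝ)) ^ (-l)) * ((n:ℝ) ^ ε) * ‖x‖)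
    (hG1 : ∀ m n, 1 ≤ n → n ≤ m → ∀ x : X,
      ‖coc A n m x‖ ≤ K * (((m:ℝ)/(n:ℝ)) ^ b) * ((n:ℝ) ^ ε) * ‖x‖)
    {n : ℕ} (hn : 1 ≤ n) (x : X) (m : ℕ) (hD : 0 ≤ D) (hK : 0 ≤ K) (hε : 0 ≤ ε) :
    Wterm A P b n x m ≤ (K * (1 + D * ((n:ℝ) ^ ε))) * ((n:ℝ) ^ ε) * ‖x‖ := by
  have hnp : (0:ℝ) < n := nat_pos_real hn
  unfold Wterm
  split
  · rename_i h
    have hpos : (0:ℝ) < (m:ℝ)/n := div_pos_nat (hn.trans h) hn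
    have hq : ‖x - P n x‖ ≤ (1 + D * ((n:ℝ) ^ ε)) * ‖x‖ := by
      calc ‖x - P n x‖ ≤ ‖x‖ + ‖P n x‖ := norm_sub_le _ _
        _ ≤ ‖x‖ + D * ((n:ℝ) ^ ε) * ‖x‖ := by
            linarith [norm_sub_P_le hS1 hn x]
        _ = (1 + D * ((n:ℝ) ^ ε)) * ‖x‖ := by ring
    calc ‖coc A n m (x - P n x)‖ * (((m:ℝ)/(n:ℝ)) ^ (-b))
        ≤ (K * (((m:ℝ)/(n:ℝ)) ^ b) * ((n:ℝ) ^ ε) * ‖x - P n x‖) * (((m:ℝ)/(n:ℝ)) ^ (-b)) :=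
          mul_le_mul_of_nonneg_right (hG1 m n hn h _) (Real.rpow_nonneg hpos.le _)
      _ = K * ((n:ℝ) ^ ε) * ‖x - P n x‖ * ((((m:ℝ)/(n:ℝ)) ^ b) * (((m:ℝ)/(n:ℝ)) ^ (-b))) := by
          ring
      _ = K * ((n:ℝ) ^ ε) * ‖x - P n x‖ := by
          rw [← Real.rpow_add hpos, add_neg_cancel, Real.rpow_zero, mul_one]
      _ ≤ K * ((n:ℝ) ^ ε) * ((1 + D * ((n:ℝ) ^ ε)) * ‖x‖) := by
          apply mul_le_mul_of_nonneg_left hq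
          positivity
      _ = (K * (1 + D * ((n:ℝ) ^ ε))) * ((n:ℝ) ^ ε) * ‖x‖ := by ring
  · positivity

end Bounds

structure Good (A P : ℕ → X →L[ℝ] X) (D l ε K b : ℝ) : Prop where
  hD : 0 < D
  hl : 0 < l
  hε : 0 ≤ ε
  hK : 0 < K
  hb : 0 < b
  hlb : l ≤ b
  hP1 : ∀ n, 1 ≤ n → ∀ x : X, P n (P n x) = P n x
  hC1 : ∀ j, 1 ≤ j → ∀ x : X, A j (P j x) = P (j + 1) (A j x)
  hI : ∀ j, 1 ≤ j → ∀ y : X, P (j + 1) y = 0 → ∃! x, P j x = 0 ∧ A j x = y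
  hS1 : ∀ m n, 1 ≤ n → n ≤ m → ∀ x : X,
      ‖coc A n m (P n x)‖ ≤ D * (((m:ℝ)/(n:ℝ)) ^ (-l)) * ((n:ℝ) ^ ε) * ‖x‖
  hU1 : ∀ m n, 1 ≤ m → m ≤ n → ∀ u x : X, P m u = 0 → coc A m n u = x - P n x →
      ‖u‖ ≤ D * (((m:ℝ)/(n:ℝ)) ^ l) * ((n:ℝ) ^ ε) * ‖x‖
  hG1 : ∀ m n, 1 ≤ n → n ≤ m → ∀ x : X,
      ‖coc A n m x‖ ≤ K * (((m:ℝ)/(n:ℝ)) ^ b) * ((n:ℝ) ^ ε) * ‖x‖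

section Main

variable {A P : ℕ → X →L[ℝ] X} {D l ε K b : ℝ}

lemma Good.hQ0 (hg : Good A P D l ε K b) {n : ℕ} (hn : 1 ≤ n) (x : X) :
    P n (x - P n x) = 0 := by rw [map_sub, hg.hP1 n hn, sub_self]

lemma Good.exu (hg : Good A P D l ε K b) {m n : ℕ} (h1 : 1 ≤ m) (h2 : m ≤ n) {y : X}
    (hy : P n y = 0) : ∃! u, P m u = 0 ∧ coc A m n u = y :=
  back_exu hg.hC1 hg.hI h1 h2 y hy

lemma Good.Sbdd (hg : Good A P D l ε K b) {n : ℕ} (hn : 1 ≤ n) (x : X) :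
    BddAbove (Set.range (Sterm A P l n x)) :=
  bdd_of_le (fun m => Sterm_le hg.hS1 hn x m hg.hD.le hg.hε)

lemma Good.Mbdd (hg : Good A P D l ε K b) {n : ℕ} (hn : 1 ≤ n) (x : X) :
    BddAbove (Set.range (Mterm A P l n x)) :=
  bdd_of_le (fun m => Mterm_le hg.hP1 hg.hC1 hg.hI hg.hU1 hn x m hg.hD.le hg.hε)

lemma Good.Wbdd (hg : Good A P D l ε K b) {n : ℕ} (hn : 1 ≤ n) (x : X) :
    BddAbove (Set.range (Wterm A P b n x)) :=
  bdd_of_le (fun m => Wterm_le hg.hS1 hg.hG1 hn x m hg.hD.le hg.hK.le hg.hε)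

lemma Nnorm_nonneg (A P : ℕ → X →L[ℝ] X) (l b : ℝ) (n : ℕ) (x : X) :
    0 ≤ Nnorm A P l b n x := by
  unfold Nnorm
  have h1 := Real.iSup_nonneg (Sterm_nonneg A P l n x)
  have h2 := Real.iSup_nonneg (Mterm_nonneg A P l n x)
  have h3 := Real.iSup_nonneg (Wterm_nonneg A P b n x)
  linarith

lemma Good.Ssup_le_Nnorm (hg : Good A P D l ε K b) {n : ℕ} (hn : 1 ≤ n) (x : X) :
    (⨆ m, Sterm A P l n x m) ≤ Nnorm A P l b n x := by
  unfold Nnorm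
  have h2 := Real.iSup_nonneg (Mterm_nonneg A P l n x)
  have h3 := Real.iSup_nonneg (Wterm_nonneg A P b n x)
  linarith

lemma Good.Msup_le_Nnorm (hg : Good A P D l ε K b) {n : ℕ} (hn : 1 ≤ n) (x : X) :
    (⨆ m, Mterm A P l n x m) ≤ Nnorm A P l b n x := by
  unfold Nnorm
  have h2 := Real.iSup_nonneg (Sterm_nonneg A P l n x)
  have h3 := Real.iSup_nonneg (Wterm_nonneg A P b n x)
  linarith

lemma Good.Wsup_le_Nnorm (hg : Good A P D l ε K b) {n : ℕ} (hn : 1 ≤ n) (x : X) :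
    (⨆ m, Wterm A P b n x m) ≤ Nnorm A P l b n x := by
  unfold Nnorm
  have h2 := Real.iSup_nonneg (Sterm_nonneg A P l n x)
  have h3 := Real.iSup_nonneg (Mterm_nonneg A P l n x)
  linarith

lemma Good.Nnorm_le (hg : Good A P D l ε K b) {n : ℕ} (hn : 1 ≤ n) (x : X) :
    Nnorm A P l b n x ≤ (2 * D + K + K * D) * ((n:ℝ) ^ (2 * ε)) * ‖x‖ := by
  have hnp : (0:ℝ) < n := nat_pos_real hn
  have hS : (⨆ m, Sterm A P l n x m) ≤ D * ((n:ℝ) ^ ε) * ‖x‖ :=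
    ciSup_le (fun m => Sterm_le hg.hS1 hn x m hg.hD.le hg.hε)
  have hM : (⨆ m, Mterm A P l n x m) ≤ D * ((n:ℝ) ^ ε) * ‖x‖ :=
    ciSup_le (fun m => Mterm_le hg.hP1 hg.hC1 hg.hI hg.hU1 hn x m hg.hD.le hg.hε)
  have hW : (⨆ m, Wterm A P b n x m) ≤ (K * (1 + D * ((n:ℝ) ^ ε))) * ((n:ℝ) ^ ε) * ‖x‖ :=
    ciSup_le (fun m => Wterm_le hg.hS1 hg.hG1 hn x m hg.hD.le hg.hK.le hg.hε)
  have hmono : ((n:ℝ) ^ ε) ≤ ((n:ℝ) ^ (2 * ε)) :=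
    Real.rpow_le_rpow_of_exponent_le (nat_one_le_real hn) (by linarith [hg.hε])
  have hsq : ((n:ℝ) ^ ε) * ((n:ℝ) ^ ε) = ((n:ℝ) ^ (2 * ε)) := by
    rw [← Real.rpow_add hnp]; ring_nf
  have hxn : (0:ℝ) ≤ ‖x‖ := norm_nonneg x
  have hεn : (0:ℝ) ≤ (n:ℝ) ^ ε := Real.rpow_nonneg hnp.le ε
  unfold Nnorm
  calc ((⨆ m, Sterm A P l n x m) + ⨆ m, Mterm A P l n x m) + ⨆ m, Wterm A P b n x m
      ≤ D * ((n:ℝ) ^ ε) * ‖x‖ + D * ((n:ℝ) ^ ε) * ‖x‖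
        + (K * (1 + D * ((n:ℝ) ^ ε))) * ((n:ℝ) ^ ε) * ‖x‖ :=
        add_le_add (add_le_add hS hM) hW
    _ = (2 * D + K) * ((n:ℝ) ^ ε) * ‖x‖ + K * D * (((n:ℝ) ^ ε) * ((n:ℝ) ^ ε)) * ‖x‖ := by ring
    _ = (2 * D + K) * ((n:ℝ) ^ ε) * ‖x‖ + K * D * ((n:ℝ) ^ (2 * ε)) * ‖x‖ := by rw [hsq]
    _ ≤ (2 * D + K) * ((n:ℝ) ^ (2 * ε)) * ‖x‖ + K * D * ((n:ℝ) ^ (2 * ε)) * ‖x‖ := by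
        refine add_le_add_left (mul_le_mul_of_nonneg_right
          (mul_le_mul_of_nonneg_left hmono (by linarith [hg.hD.le, hg.hK.le])) hxn) _
    _ = (2 * D + K + K * D) * ((n:ℝ) ^ (2 * ε)) * ‖x‖ := by ring

lemma Good.le_Nnorm (hg : Good A P D l ε K b) {n : ℕ} (hn : 1 ≤ n) (x : X) :
    ‖x‖ ≤ Nnorm A P l b n x := by
  have hnp : (0:ℝ) < n := nat_pos_real hn
  have hS : ‖P n x‖ ≤ ⨆ m, Sterm A P l n x m := by
    have := le_ciSup (hg.Sbdd hn x) n
    rwa [Sterm, if_pos le_rfl, coc_self_apply, div_self hnp.ne', Real.one_rpow, mul_one] at this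
  have hgQ : gB A P n n (x - P n x) = x - P n x :=
    (gB_eq (hg.exu hn le_rfl (hg.hQ0 hn x)) ⟨hg.hQ0 hn x, coc_self_apply A n _⟩).symm
  have hM : ‖x - P n x‖ ≤ ⨆ m, Mterm A P l n x m := by
    have := le_ciSup (hg.Mbdd hn x) n
    rwa [Mterm, if_pos ⟨hn, le_rfl⟩, hgQ, div_self hnp.ne', Real.one_rpow, mul_one] at this
  have hW := Real.iSup_nonneg (Wterm_nonneg A P b n x)
  have : ‖x‖ ≤ ‖P n x‖ + ‖x - P n x‖ := by
    calc ‖x‖ = ‖P n x + (x - P n x)‖ := by rw [show P n x + (x - P n x) = x from by abel]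
      _ ≤ ‖P n x‖ + ‖x - P n x‖ := norm_add_le _ _
  unfold Nnorm
  linarith

lemma Good.Nnorm_add (hg : Good A P D l ε K b) {n : ℕ} (hn : 1 ≤ n) (x y : X) :
    Nnorm A P l b n (x + y) ≤ Nnorm A P l b n x + Nnorm A P l b n y := by
  have hQadd : (x + y) - P n (x + y) = (x - P n x) + (y - P n y) := by
    rw [map_add]; abel
  have hSpt : ∀ m, Sterm A P l n (x + y) m ≤ Sterm A P l n x m + Sterm A P l n y m := by
    intro m
    unfold Sterm
    split
    · rw [map_add, map_add]
      refine le_trans (mul_le_mul_of_nonneg_right (norm_add_le _ _) ?_) (le_of_eq (by ring))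
      positivity
    · simp
  have hMpt : ∀ m, Mterm A P l n (x + y) m ≤ Mterm A P l n x m + Mterm A P l n y m := by
    intro m
    unfold Mterm
    split
    · rename_i h
      obtain ⟨h1, h2⟩ := h
      have hsx := gB_spec (hg.exu h1 h2 (hg.hQ0 hn x))
      have hsy := gB_spec (hg.exu h1 h2 (hg.hQ0 hn y))
      have hgadd : gB A P m n ((x + y) - P n (x + y))
          = gB A P m n (x - P n x) + gB A P m n (y - P n y) := by
        refine (gB_eq (hg.exu h1 h2 (hg.hQ0 hn (x + y))) ⟨?_, ?_⟩).symm
        · rw [map_add, hsx.1, hsy.1, add_zero]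
        · rw [map_add, hsx.2, hsy.2, hQadd]
      rw [hgadd]
      refine le_trans (mul_le_mul_of_nonneg_right (norm_add_le _ _) ?_) (le_of_eq (by ring))
      positivity
    · simp
  have hWpt : ∀ m, Wterm A P b n (x + y) m ≤ Wterm A P b n x m + Wterm A P b n y m := by
    intro m
    unfold Wterm
    split
    · rw [hQadd, map_add]
      refine le_trans (mul_le_mul_of_nonneg_right (norm_add_le _ _) ?_) (le_of_eq (by ring))
      positivity
    · simp
  have hS : (⨆ m, Sterm A P l n (x + y) m)
      ≤ (⨆ m, Sterm A P l n x m) + (⨆ m, Sterm A P l n y m) :=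
    ciSup_le fun m => (hSpt m).trans
      (add_le_add (le_ciSup (hg.Sbdd hn x) m) (le_ciSup (hg.Sbdd hn y) m))
  have hM : (⨆ m, Mterm A P l n (x + y) m)
      ≤ (⨆ m, Mterm A P l n x m) + (⨆ m, Mterm A P l n y m) :=
    ciSup_le fun m => (hMpt m).trans
      (add_le_add (le_ciSup (hg.Mbdd hn x) m) (le_ciSup (hg.Mbdd hn y) m))
  have hW : (⨆ m, Wterm A P b n (x + y) m)
      ≤ (⨆ m, Wterm A P b n x m) + (⨆ m, Wterm A P b n y m) :=
    ciSup_le fun m => (hWpt m).trans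
      (add_le_add (le_ciSup (hg.Wbdd hn x) m) (le_ciSup (hg.Wbdd hn y) m))
  unfold Nnorm
  linarith

lemma Good.Nnorm_smul (hg : Good A P D l ε K b) {n : ℕ} (hn : 1 ≤ n) (c : ℝ) (x : X) :
    Nnorm A P l b n (c • x) = |c| * Nnorm A P l b n x := by
  have hQs : (c • x) - P n (c • x) = c • (x - P n x) := by
    rw [map_smul, smul_sub]
  have hSpt : ∀ m, Sterm A P l n (c • x) m = |c| * Sterm A P l n x m := by
    intro m
    unfold Sterm
    split
    · rw [map_smul, map_smul, norm_smul, Real.norm_eq_abs, mul_assoc]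
    · rw [mul_zero]
  have hMpt : ∀ m, Mterm A P l n (c • x) m = |c| * Mterm A P l n x m := by
    intro m
    unfold Mterm
    split
    · rename_i h
      obtain ⟨h1, h2⟩ := h
      have hsx := gB_spec (hg.exu h1 h2 (hg.hQ0 hn x))
      have hq : P n (c • (x - P n x)) = 0 := by rw [map_smul, hg.hQ0 hn x, smul_zero]
      have hgs : gB A P m n ((c • x) - P n (c • x)) = c • gB A P m n (x - P n x) := by
        rw [hQs]
        refine (gB_eq (hg.exu h1 h2 hq) ⟨?_, ?_⟩).symm
        · rw [map_smul, hsx.1, smul_zero]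
        · rw [map_smul, hsx.2]
      rw [hgs, norm_smul, Real.norm_eq_abs, mul_assoc]
    · rw [mul_zero]
  have hWpt : ∀ m, Wterm A P b n (c • x) m = |c| * Wterm A P b n x m := by
    intro m
    unfold Wterm
    split
    · rw [hQs, map_smul, norm_smul, Real.norm_eq_abs, mul_assoc]
    · rw [mul_zero]
  unfold Nnorm
  rw [iSup_congr hSpt, iSup_congr hMpt, iSup_congr hWpt,
    ← Real.mul_iSup_of_nonneg (abs_nonneg c), ← Real.mul_iSup_of_nonneg (abs_nonneg c),
    ← Real.mul_iSup_of_nonneg (abs_nonneg c)]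
  ring

lemma rpow_div_split {a bb c : ℝ} (ha : 0 ≤ a) (hbb : 0 < bb) (hc : 0 ≤ c) (e : ℝ) :
    (a / c) ^ e = (a / bb) ^ e * (bb / c) ^ e := by
  rw [div_trans_eq hbb.ne', Real.mul_rpow (by positivity) (by positivity)]

lemma rpow_cancel {t : ℝ} (ht : 0 < t) (e : ℝ) : t ^ e * t ^ (-e) = 1 := by
  rw [← Real.rpow_add ht, add_neg_cancel, Real.rpow_zero]

lemma Good.Nnorm_stable (hg : Good A P D l ε K b) {n m : ℕ} (hn : 1 ≤ n) (hnm : n ≤ m)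
    (x : X) :
    Nnorm A P l b m (coc A n m (P n x)) ≤
      2 * (((m:ℝ)/(n:ℝ)) ^ (-l)) * Nnorm A P l b n x := by
  have hm : 1 ≤ m := hn.trans hnm
  have hnp : (0:ℝ) < n := nat_pos_real hn
  have hmp : (0:ℝ) < m := nat_pos_real hm
  set y := coc A n m (P n x) with hy
  have hPy : P m y = y := by
    rw [hy, P_coc hg.hC1 hn hnm, hg.hP1 n hn]
  have hQy : y - P m y = 0 := by rw [hPy, sub_self]
  have hfac : (0:ℝ) ≤ ((m:ℝ)/(n:ℝ)) ^ (-l) := Real.rpow_nonneg (by positivity) _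
  have hNn : 0 ≤ Nnorm A P l b n x := Nnorm_nonneg A P l b n x
  have hM0 : (⨆ k, Mterm A P l m y k) = 0 := by
    have hpt : ∀ k, Mterm A P l m y k = 0 := by
      intro k
      unfold Mterm
      split
      · rename_i h
        have hg0 : (0:X) = gB A P k m (y - P m y) := by
          refine gB_eq (hg.exu h.1 h.2 (by rw [hQy, map_zero])) ⟨map_zero _, ?_⟩
          rw [map_zero, hQy]
        rw [← hg0, norm_zero, zero_mul]
      · rfl
    rw [iSup_congr hpt, ciSup_const]
  have hW0 : (⨆ k, Wterm A P b m y k) = 0 := by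
    have hpt : ∀ k, Wterm A P b m y k = 0 := by
      intro k
      unfold Wterm
      split
      · rw [hQy, map_zero, norm_zero, zero_mul]
      · rfl
    rw [iSup_congr hpt, ciSup_const]
  have hS : (⨆ k, Sterm A P l m y k) ≤ (((m:ℝ)/(n:ℝ)) ^ (-l)) * Nnorm A P l b n x := by
    refine ciSup_le fun k => ?_
    unfold Sterm
    split
    · rename_i hmk
      have hnk : n ≤ k := hnm.trans hmk
      have hkp : (0:ℝ) < k := nat_pos_real (hn.trans hnk)
      have hcc : coc A m k (P m y) = coc A n k (P n x) := by
        rw [hPy, hy, coc_coc A hnm hmk]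
      have hsplit : ((k:ℝ)/(m:ℝ)) ^ l = ((k:ℝ)/(n:ℝ)) ^ l * (((m:ℝ)/(n:ℝ)) ^ (-l)) := by
        rw [rpow_div_split hkp.le hnp hmp.le l, rpow_neg_div hmp.le hnp.le]
      have hterm : ‖coc A m k (P m y)‖ * ((k:ℝ)/(m:ℝ)) ^ l
          = (((m:ℝ)/(n:ℝ)) ^ (-l)) * Sterm A P l n x k := by
        rw [hcc, hsplit, Sterm, if_pos hnk]; ring
      rw [hterm]
      refine mul_le_mul_of_nonneg_left ?_ hfac
      exact (le_ciSup (hg.Sbdd hn x) k).trans (hg.Ssup_le_Nnorm hn x)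
    · positivity
  have := Nnorm_nonneg A P l b m y
  unfold Nnorm at *
  rw [hM0, hW0]
  nlinarith [mul_nonneg hfac hNn]

lemma Good.Nnorm_unstable (hg : Good A P D l ε K b) {m n : ℕ} (hm : 1 ≤ m) (hmn : m ≤ n)
    {u : X} (hu : P m u = 0) :
    Nnorm A P l b m u ≤ 2 * (((m:ℝ)/(n:ℝ)) ^ l) * Nnorm A P l b n (coc A m n u) := by
  have hn : 1 ≤ n := hm.trans hmn
  have hnp : (0:ℝ) < n := nat_pos_real hn
  have hmp : (0:ℝ) < m := nat_pos_real hm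
  set v := coc A m n u with hv
  have hPv : P n v = 0 := by rw [hv, P_coc hg.hC1 hm hmn, hu, map_zero]
  have hQv : v - P n v = v := by rw [hPv, sub_zero]
  have hQu : u - P m u = u := by rw [hu, sub_zero]
  have hfac : (0:ℝ) ≤ ((m:ℝ)/(n:ℝ)) ^ l := Real.rpow_nonneg (by positivity) _
  have hNv : 0 ≤ Nnorm A P l b n v := Nnorm_nonneg A P l b n v
  have hS0 : (⨆ k, Sterm A P l m u k) = 0 := by
    have hpt : ∀ k, Sterm A P l m u k = 0 := by
      intro k
      unfold Sterm
      split
      · rw [hu, map_zero, norm_zero, zero_mul]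
      · rfl
    rw [iSup_congr hpt, ciSup_const]
  have hM : (⨆ k, Mterm A P l m u k) ≤ (((m:ℝ)/(n:ℝ)) ^ l) * Nnorm A P l b n v := by
    refine ciSup_le fun k => ?_
    unfold Mterm
    split
    · rename_i h
      obtain ⟨h1, h2⟩ := h
      have hkp : (0:ℝ) < k := nat_pos_real h1
      have hw := gB_spec (hg.exu h1 h2 (show P m (u - P m u) = 0 by rw [hQu]; exact hu))
      set w := gB A P k m (u - P m u) with hwdef
      have hwg : w = gB A P k n v := by
        refine gB_eq (hg.exu h1 (h2.trans hmn) hPv) ⟨hw.1, ?_⟩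
        rw [← coc_coc A h2 hmn w, hw.2, hQu, hv]
      have hsplit : ((m:ℝ)/(k:ℝ)) ^ l = (((m:ℝ)/(n:ℝ)) ^ l) * ((n:ℝ)/(k:ℝ)) ^ l :=
        rpow_div_split hmp.le hnp hkp.le l
      have hterm : ‖w‖ * ((m:ℝ)/(k:ℝ)) ^ l
          = (((m:ℝ)/(n:ℝ)) ^ l) * Mterm A P l n v k := by
        rw [hsplit, Mterm, if_pos ⟨h1, h2.trans hmn⟩, hQv, ← hwg]; ring
      rw [hterm]
      refine mul_le_mul_of_nonneg_left ?_ hfac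
      exact (le_ciSup (hg.Mbdd hn v) k).trans (hg.Msup_le_Nnorm hn v)
    · positivity
  have hW : (⨆ k, Wterm A P b m u k) ≤ (((m:ℝ)/(n:ℝ)) ^ l) * Nnorm A P l b n v := by
    refine ciSup_le fun k => ?_
    unfold Wterm
    split
    · rename_i hmk
      have h1k : 1 ≤ k := hm.trans hmk
      have hkp : (0:ℝ) < k := nat_pos_real h1k
      rw [hQu]
      rcases le_total k n with hkn | hnk
      · -- k ≤ n : compare with Mterm n v k
        set wk := coc A m k u with hwk
        have hw0 : P k wk = 0 := by rw [hwk, P_coc hg.hC1 hm hmk, hu, map_zero]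
        have hwc : coc A k n wk = v := by rw [hwk, coc_coc A hmk hkn, hv]
        have hwg : wk = gB A P k n v := gB_eq (hg.exu h1k hkn hPv) ⟨hw0, hwc⟩
        have hMv : Mterm A P l n v k = ‖wk‖ * ((n:ℝ)/(k:ℝ)) ^ l := by
          rw [Mterm, if_pos ⟨h1k, hkn⟩, hQv, ← hwg]
        have hexp : ((k:ℝ)/(m:ℝ)) ^ (-b) ≤ (((m:ℝ)/(n:ℝ)) ^ l) * ((n:ℝ)/(k:ℝ)) ^ l := by
          rw [rpow_neg_div hkp.le hmp.le, ← rpow_div_split hmp.le hnp hkp.le l]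
          exact Real.rpow_le_rpow_of_exponent_ge (div_pos_nat hm h1k)
            (div_le_one_nat h1k hmk) hg.hlb
        calc ‖wk‖ * ((k:ℝ)/(m:ℝ)) ^ (-b)
            ≤ ‖wk‖ * ((((m:ℝ)/(n:ℝ)) ^ l) * ((n:ℝ)/(k:ℝ)) ^ l) :=
              mul_le_mul_of_nonneg_left hexp (norm_nonneg _)
          _ = (((m:ℝ)/(n:ℝ)) ^ l) * Mterm A P l n v k := by rw [hMv]; ring
          _ ≤ (((m:ℝ)/(n:ℝ)) ^ l) * Nnorm A P l b n v :=
              mul_le_mul_of_nonneg_left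
                ((le_ciSup (hg.Mbdd hn v) k).trans (hg.Msup_le_Nnorm hn v)) hfac
      · -- n ≤ k : compare with Wterm n v k
        have hcc : coc A m k u = coc A n k v := by rw [hv, coc_coc A hmn hnk]
        have hWv : Wterm A P b n v k = ‖coc A n k v‖ * ((k:ℝ)/(n:ℝ)) ^ (-b) := by
          rw [Wterm, if_pos hnk, hQv]
        have hexp : ((k:ℝ)/(m:ℝ)) ^ (-b)
            ≤ (((m:ℝ)/(n:ℝ)) ^ l) * ((k:ℝ)/(n:ℝ)) ^ (-b) := by
          have e1 : ((k:ℝ)/(m:ℝ)) ^ (-b)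
              = (((m:ℝ)/(n:ℝ)) ^ b) * ((k:ℝ)/(n:ℝ)) ^ (-b) := by
            rw [rpow_neg_div hkp.le hmp.le, rpow_neg_div hkp.le hnp.le,
              rpow_div_split hmp.le hnp hkp.le b]
          rw [e1]
          refine mul_le_mul_of_nonneg_right ?_ (Real.rpow_nonneg (by positivity) _)
          exact Real.rpow_le_rpow_of_exponent_ge (div_pos_nat hm hn)
            (div_le_one_nat hn hmn) hg.hlb
        calc ‖coc A m k u‖ * ((k:ℝ)/(m:ℝ)) ^ (-b)
            ≤ ‖coc A m k u‖ * ((((m:ℝ)/(n:ℝ)) ^ l) * ((k:ℝ)/(n:ℝ)) ^ (-b)) :=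
              mul_le_mul_of_nonneg_left hexp (norm_nonneg _)
          _ = (((m:ℝ)/(n:ℝ)) ^ l) * Wterm A P b n v k := by rw [hWv, hcc]; ring
          _ ≤ (((m:ℝ)/(n:ℝ)) ^ l) * Nnorm A P l b n v :=
              mul_le_mul_of_nonneg_left
                ((le_ciSup (hg.Wbdd hn v) k).trans (hg.Wsup_le_Nnorm hn v)) hfac
    · positivity
  have hNe : Nnorm A P l b m u = (⨆ k, Sterm A P l m u k) + (⨆ k, Mterm A P l m u k)
      + (⨆ k, Wterm A P b m u k) := rfl
  rw [hNe, hS0]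
  linarith

lemma Good.Nnorm_grow (hg : Good A P D l ε K b) {n m : ℕ} (hn : 1 ≤ n) (hnm : n ≤ m)
    (x : X) :
    Nnorm A P l b m (coc A n m x) ≤ 3 * (((m:ℝ)/(n:ℝ)) ^ (b + l)) * Nnorm A P l b n x := by
  have hm : 1 ≤ m := hn.trans hnm
  have hnp : (0:ℝ) < n := nat_pos_real hn
  have hmp : (0:ℝ) < m := nat_pos_real hm
  have hone : (1:ℝ) ≤ (m:ℝ)/(n:ℝ) := one_le_div_nat hn hnm
  set y := coc A n m x with hy
  have hPy : P m y = coc A n m (P n x) := by rw [hy, P_coc hg.hC1 hn hnm]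
  have hQy : y - P m y = coc A n m (x - P n x) := by rw [hPy, hy, ← map_sub]
  have hQ0n : P n (x - P n x) = 0 := hg.hQ0 hn x
  have hNx : 0 ≤ Nnorm A P l b n x := Nnorm_nonneg A P l b n x
  have hfacbl : (1:ℝ) ≤ ((m:ℝ)/(n:ℝ)) ^ (b + l) :=
    Real.one_le_rpow hone (by linarith [hg.hb.le, hg.hl.le])
  have hfac0 : (0:ℝ) ≤ ((m:ℝ)/(n:ℝ)) ^ (b + l) := by linarith
  have hbound : Nnorm A P l b n x ≤ (((m:ℝ)/(n:ℝ)) ^ (b + l)) * Nnorm A P l b n x := by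
    nlinarith
  have hS : (⨆ k, Sterm A P l m y k) ≤ (((m:ℝ)/(n:ℝ)) ^ (b + l)) * Nnorm A P l b n x := by
    refine ciSup_le fun k => ?_
    unfold Sterm
    split
    · rename_i hmk
      have hnk : n ≤ k := hnm.trans hmk
      have hkp : (0:ℝ) < k := nat_pos_real (hn.trans hnk)
      have hcc : coc A m k (P m y) = coc A n k (P n x) := by
        rw [hPy, coc_coc A hnm hmk]
      have hexp : ((k:ℝ)/(m:ℝ)) ^ l ≤ ((k:ℝ)/(n:ℝ)) ^ l := by
        exact Real.rpow_le_rpow (by positivity) (by gcongr) hg.hl.le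
      calc ‖coc A m k (P m y)‖ * ((k:ℝ)/(m:ℝ)) ^ l
          ≤ ‖coc A n k (P n x)‖ * ((k:ℝ)/(n:ℝ)) ^ l := by
            rw [hcc]; exact mul_le_mul_of_nonneg_left hexp (norm_nonneg _)
        _ = Sterm A P l n x k := by rw [Sterm, if_pos hnk]
        _ ≤ Nnorm A P l b n x :=
            (le_ciSup (hg.Sbdd hn x) k).trans (hg.Ssup_le_Nnorm hn x)
        _ ≤ (((m:ℝ)/(n:ℝ)) ^ (b + l)) * Nnorm A P l b n x := hbound
    · positivity
  have hM : (⨆ k, Mterm A P l m y k) ≤ (((m:ℝ)/(n:ℝ)) ^ (b + l)) * Nnorm A P l b n x := by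
    refine ciSup_le fun k => ?_
    unfold Mterm
    split
    · rename_i h
      obtain ⟨h1, h2⟩ := h
      have hkp : (0:ℝ) < k := nat_pos_real h1
      have hPQy : P m (y - P m y) = 0 := hg.hQ0 hm y
      rcases le_total k n with hkn | hnk
      · -- k ≤ n
        have hw' := gB_spec (hg.exu h1 hkn hQ0n)
        set w' := gB A P k n (x - P n x) with hw'def
        have hgg : gB A P k m (y - P m y) = w' := by
          refine (gB_eq (hg.exu h1 h2 hPQy) ⟨hw'.1, ?_⟩).symm
          rw [hQy, ← coc_coc A hkn hnm w', hw'.2]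
        have hsplit : ((m:ℝ)/(k:ℝ)) ^ l = (((m:ℝ)/(n:ℝ)) ^ l) * ((n:ℝ)/(k:ℝ)) ^ l :=
          rpow_div_split hmp.le hnp hkp.le l
        have hfl : ((m:ℝ)/(n:ℝ)) ^ l ≤ ((m:ℝ)/(n:ℝ)) ^ (b + l) :=
          Real.rpow_le_rpow_of_exponent_le hone (by linarith [hg.hb.le])
        calc ‖gB A P k m (y - P m y)‖ * ((m:ℝ)/(k:ℝ)) ^ l
            = (((m:ℝ)/(n:ℝ)) ^ l) * Mterm A P l n x k := by
              rw [hgg, hsplit, Mterm, if_pos ⟨h1, hkn⟩]; ring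
          _ ≤ (((m:ℝ)/(n:ℝ)) ^ l) * Nnorm A P l b n x :=
              mul_le_mul_of_nonneg_left
                ((le_ciSup (hg.Mbdd hn x) k).trans (hg.Msup_le_Nnorm hn x))
                (Real.rpow_nonneg (by positivity) _)
          _ ≤ (((m:ℝ)/(n:ℝ)) ^ (b + l)) * Nnorm A P l b n x :=
              mul_le_mul_of_nonneg_right hfl hNx
      · -- n ≤ k
        set z := coc A n k (x - P n x) with hz
        have hz0 : P k z = 0 := by
          rw [hz, P_coc hg.hC1 hn hnk, hQ0n, map_zero]
        have hgg : gB A P k m (y - P m y) = z := by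
          refine (gB_eq (hg.exu h1 h2 hPQy) ⟨hz0, ?_⟩).symm
          rw [hz, coc_coc A hnk h2, hQy]
        have hWt : Wterm A P b n x k = ‖z‖ * ((k:ℝ)/(n:ℝ)) ^ (-b) := by
          rw [Wterm, if_pos hnk, hz]
        have e1 : ((k:ℝ)/(n:ℝ)) ^ b ≤ ((m:ℝ)/(n:ℝ)) ^ b :=
          Real.rpow_le_rpow (by positivity) (by gcongr) hg.hb.le
        have e5 : ((m:ℝ)/(n:ℝ)) ^ (-b) ≤ ((k:ℝ)/(n:ℝ)) ^ (-b) := by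
          rw [Real.rpow_neg (by positivity), Real.rpow_neg (by positivity)]
          exact inv_anti₀ (Real.rpow_pos_of_pos (div_pos_nat (hn.trans hnk) hn) b) e1
        have hexp : ((m:ℝ)/(k:ℝ)) ^ l
            ≤ (((m:ℝ)/(n:ℝ)) ^ (b + l)) * ((k:ℝ)/(n:ℝ)) ^ (-b) := by
          calc ((m:ℝ)/(k:ℝ)) ^ l ≤ ((m:ℝ)/(n:ℝ)) ^ l :=
                Real.rpow_le_rpow (by positivity) (by gcongr) hg.hl.le
            _ = (((m:ℝ)/(n:ℝ)) ^ (b + l)) * ((m:ℝ)/(n:ℝ)) ^ (-b) := by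
                rw [← Real.rpow_add (div_pos_nat hm hn)]; ring_nf
            _ ≤ (((m:ℝ)/(n:ℝ)) ^ (b + l)) * ((k:ℝ)/(n:ℝ)) ^ (-b) :=
                mul_le_mul_of_nonneg_left e5 hfac0
        calc ‖gB A P k m (y - P m y)‖ * ((m:ℝ)/(k:ℝ)) ^ l
            = ‖z‖ * ((m:ℝ)/(k:ℝ)) ^ l := by rw [hgg]
          _ ≤ ‖z‖ * ((((m:ℝ)/(n:ℝ)) ^ (b + l)) * ((k:ℝ)/(n:ℝ)) ^ (-b)) :=
              mul_le_mul_of_nonneg_left hexp (norm_nonneg _)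
          _ = (((m:ℝ)/(n:ℝ)) ^ (b + l)) * Wterm A P b n x k := by rw [hWt]; ring
          _ ≤ (((m:ℝ)/(n:ℝ)) ^ (b + l)) * Nnorm A P l b n x :=
              mul_le_mul_of_nonneg_left
                ((le_ciSup (hg.Wbdd hn x) k).trans (hg.Wsup_le_Nnorm hn x)) hfac0
    · positivity
  have hW : (⨆ k, Wterm A P b m y k) ≤ (((m:ℝ)/(n:ℝ)) ^ (b + l)) * Nnorm A P l b n x := by
    refine ciSup_le fun k => ?_
    unfold Wterm
    split
    · rename_i hmk
      have hnk : n ≤ k := hnm.trans hmk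
      have hkp : (0:ℝ) < k := nat_pos_real (hn.trans hnk)
      have hcc : coc A m k (y - P m y) = coc A n k (x - P n x) := by
        rw [hQy, coc_coc A hnm hmk]
      have hWt : Wterm A P b n x k = ‖coc A n k (x - P n x)‖ * ((k:ℝ)/(n:ℝ)) ^ (-b) := by
        rw [Wterm, if_pos hnk]
      have hexp : ((k:ℝ)/(m:ℝ)) ^ (-b)
          ≤ (((m:ℝ)/(n:ℝ)) ^ (b + l)) * ((k:ℝ)/(n:ℝ)) ^ (-b) := by
        have e1 : ((k:ℝ)/(m:ℝ)) ^ (-b)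
            = (((m:ℝ)/(n:ℝ)) ^ b) * ((k:ℝ)/(n:ℝ)) ^ (-b) := by
          rw [rpow_neg_div hkp.le hmp.le, rpow_neg_div hkp.le hnp.le,
            rpow_div_split hmp.le hnp hkp.le b]
        rw [e1]
        refine mul_le_mul_of_nonneg_right ?_ (Real.rpow_nonneg (by positivity) _)
        exact Real.rpow_le_rpow_of_exponent_le hone (by linarith [hg.hl.le])
      calc ‖coc A m k (y - P m y)‖ * ((k:ℝ)/(m:ℝ)) ^ (-b)
          ≤ ‖coc A n k (x - P n x)‖ * ((((m:ℝ)/(n:ℝ)) ^ (b + l)) * ((k:ℝ)/(n:ℝ)) ^ (-b)) := by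
            rw [hcc]; exact mul_le_mul_of_nonneg_left hexp (norm_nonneg _)
        _ = (((m:ℝ)/(n:ℝ)) ^ (b + l)) * Wterm A P b n x k := by rw [hWt]; ring
        _ ≤ (((m:ℝ)/(n:ℝ)) ^ (b + l)) * Nnorm A P l b n x :=
            mul_le_mul_of_nonneg_left
              ((le_ciSup (hg.Wbdd hn x) k).trans (hg.Wsup_le_Nnorm hn x)) hfac0
    · positivity
  have hNe : Nnorm A P l b m y = (⨆ k, Sterm A P l m y k) + (⨆ k, Mterm A P l m y k)
      + (⨆ k, Wterm A P b m y k) := rfl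
  rw [hNe]
  linarith


end Main

section MainProof

variable {A P : ℕ → X →L[ℝ] X}

lemma snupd_forward (h : SNUPD A) :
    ∃ (N : ℕ → X → ℝ) (C ε M a : ℝ), 0 < C ∧ 0 ≤ ε ∧ 0 < M ∧ 0 < a ∧
      AdaptedNorms N C ε ∧ PolyDich A N ∧ Grow A N M a := by
  obtain ⟨P, D, lam, ε, K, b, hD, hlam, hε, hK, hb, ⟨h1, h2, h3, h4, h5⟩, hGr⟩ := h
  set l := min lam b with hldef
  have hl : 0 < l := lt_min hlam hb
  have hlb : l ≤ b := min_le_right _ _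
  have hllam : l ≤ lam := min_le_left _ _
  have hP1 : ∀ n, 1 ≤ n → ∀ x : X, P n (P n x) = P n x := by
    intro n hn x
    have := congrArg (fun T : X →L[ℝ] X => T x) (h1 n hn)
    simpa using this
  have hC1 : ∀ j, 1 ≤ j → ∀ x : X, A j (P j x) = P (j + 1) (A j x) := by
    intro j hj x
    have := congrArg (fun T : X →L[ℝ] X => T x) (h2 j hj)
    simpa using this
  have hS1 : ∀ m n, 1 ≤ n → n ≤ m → ∀ x : X,
      ‖coc A n m (P n x)‖ ≤ D * (((m:ℝ)/(n:ℝ)) ^ (-l)) * ((n:ℝ) ^ ε) * ‖x‖ := by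
    intro m n hn hnm x
    refine (h4 m n hn hnm x).trans ?_
    have hr : ((m:ℝ)/(n:ℝ)) ^ (-lam) ≤ ((m:ℝ)/(n:ℝ)) ^ (-l) :=
      Real.rpow_le_rpow_of_exponent_le (one_le_div_nat hn hnm) (neg_le_neg hllam)
    have hnn : (0:ℝ) ≤ ((n:ℝ) ^ ε) := Real.rpow_nonneg (nat_pos_real hn).le ε
    exact mul_le_mul_of_nonneg_right (mul_le_mul_of_nonneg_right
      (mul_le_mul_of_nonneg_left hr hD.le) hnn) (norm_nonneg x)
  have hU1 : ∀ m n, 1 ≤ m → m ≤ n → ∀ u x : X, P m u = 0 → coc A m n u = x - P n x →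
      ‖u‖ ≤ D * (((m:ℝ)/(n:ℝ)) ^ l) * ((n:ℝ) ^ ε) * ‖x‖ := by
    intro m n hm hmn u x hu hc
    refine (h5 m n hm hmn u x hu hc).trans ?_
    have hn : 1 ≤ n := hm.trans hmn
    have hr : ((m:ℝ)/(n:ℝ)) ^ lam ≤ ((m:ℝ)/(n:ℝ)) ^ l :=
      Real.rpow_le_rpow_of_exponent_ge (div_pos_nat hm hn) (div_le_one_nat hn hmn) hllam
    have hnn : (0:ℝ) ≤ ((n:ℝ) ^ ε) := Real.rpow_nonneg (nat_pos_real hn).le ε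
    exact mul_le_mul_of_nonneg_right (mul_le_mul_of_nonneg_right
      (mul_le_mul_of_nonneg_left hr hD.le) hnn) (norm_nonneg x)
  have hg : Good A P D l ε K b := ⟨hD, hl, hε, hK, hb, hlb, hP1, hC1, h3, hS1, hU1, hGr⟩
  refine ⟨Nnorm A P l b, 2 * D + K + K * D, 2 * ε, 3, b + l, ?_, by linarith, by norm_num,
    by linarith, ?_, ?_, ?_⟩
  · nlinarith
  · exact fun m hm => ⟨hg.Nnorm_add hm, hg.Nnorm_smul hm,
      fun x => ⟨hg.le_Nnorm hm x, hg.Nnorm_le hm x⟩⟩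
  · exact ⟨P, 2, l, two_pos, hl, h1, h2, h3,
      fun m n hn hnm x => hg.Nnorm_stable hn hnm x,
      fun m n hm hmn u hu => hg.Nnorm_unstable hm hmn hu⟩
  · exact fun m n hn hnm x => hg.Nnorm_grow hn hnm x

lemma snupd_backward
    (h : ∃ (N : ℕ → X → ℝ) (C ε M a : ℝ), 0 < C ∧ 0 ≤ ε ∧ 0 < M ∧ 0 < a ∧
      AdaptedNorms N C ε ∧ PolyDich A N ∧ Grow A N M a) : SNUPD A := by
  obtain ⟨N, C, ε, M, a, hC, hε, hM, ha, hAd, ⟨P, D, lam, hD, hlam, h1, h2, h3, h4, h5⟩,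
    hGr⟩ := h
  have hlow : ∀ n, 1 ≤ n → ∀ x : X, ‖x‖ ≤ N n x := fun n hn x => ((hAd n hn).2.2 x).1
  have hup : ∀ n, 1 ≤ n → ∀ x : X, N n x ≤ C * ((n:ℝ) ^ ε) * ‖x‖ :=
    fun n hn x => ((hAd n hn).2.2 x).2
  have hN0 : ∀ n, 1 ≤ n → ∀ x : X, 0 ≤ N n x :=
    fun n hn x => (norm_nonneg x).trans (hlow n hn x)
  have hmono : ∀ n : ℕ, 1 ≤ n → ((n:ℝ) ^ ε) ≤ ((n:ℝ) ^ (2 * ε)) := fun n hn =>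
    Real.rpow_le_rpow_of_exponent_le (nat_one_le_real hn) (by linarith)
  have hsq : ∀ n : ℕ, 1 ≤ n → ((n:ℝ) ^ ε) * ((n:ℝ) ^ ε) = ((n:ℝ) ^ (2 * ε)) := by
    intro n hn
    rw [← Real.rpow_add (nat_pos_real hn)]
    ring_nf
  refine ⟨P, D * C * (1 + D * C), lam, 2 * ε, M * C, a, by nlinarith [mul_pos hD hC],
    hlam, by linarith, mul_pos hM hC, ha, ⟨h1, h2, h3, ?_, ?_⟩, ?_⟩
  · -- stable
    intro m n hn hnm x
    have hm : 1 ≤ m := hn.trans hnm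
    have ht : (0:ℝ) ≤ (n:ℝ) ^ ε := Real.rpow_nonneg (nat_pos_real hn).le ε
    have ht2 : (0:ℝ) ≤ (n:ℝ) ^ (2 * ε) := Real.rpow_nonneg (nat_pos_real hn).le _
    have hr : (0:ℝ) ≤ ((m:ℝ)/(n:ℝ)) ^ (-lam) := Real.rpow_nonneg (by positivity) _
    calc ‖coc A n m (P n x)‖ ≤ N m (coc A n m (P n x)) := hlow m hm _
      _ ≤ D * (((m:ℝ)/(n:ℝ)) ^ (-lam)) * N n x := h4 m n hn hnm x
      _ ≤ D * (((m:ℝ)/(n:ℝ)) ^ (-lam)) * (C * ((n:ℝ) ^ ε) * ‖x‖) :=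
          mul_le_mul_of_nonneg_left (hup n hn x) (mul_nonneg hD.le hr)
      _ ≤ D * C * (1 + D * C) * (((m:ℝ)/(n:ℝ)) ^ (-lam)) * ((n:ℝ) ^ (2 * ε)) * ‖x‖ := by
          nlinarith [mul_le_mul_of_nonneg_right (mul_le_mul_of_nonneg_left (hmono n hn)
              (mul_nonneg (mul_nonneg hD.le hC.le) hr)) (norm_nonneg x),
            mul_nonneg (mul_nonneg (mul_nonneg (mul_nonneg
              (mul_nonneg (mul_nonneg hD.le hC.le) hD.le) hC.le) hr) ht2) (norm_nonneg x)]
  · -- unstable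
    intro m n hm hmn u x hu hcu
    have hn : 1 ≤ n := hm.trans hmn
    have ht : (0:ℝ) ≤ (n:ℝ) ^ ε := Real.rpow_nonneg (nat_pos_real hn).le ε
    have ht2 : (0:ℝ) ≤ (n:ℝ) ^ (2 * ε) := Real.rpow_nonneg (nat_pos_real hn).le _
    have hs : (0:ℝ) ≤ ((m:ℝ)/(n:ℝ)) ^ lam := Real.rpow_nonneg (by positivity) _
    have hPx : ‖P n x‖ ≤ D * C * ((n:ℝ) ^ ε) * ‖x‖ := by
      have e1 : N n (coc A n n (P n x)) ≤ D * (((n:ℝ)/(n:ℝ)) ^ (-lam)) * N n x :=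
        h4 n n hn le_rfl x
      rw [coc_self_apply, div_self (nat_pos_real hn).ne', Real.rpow_neg (by norm_num),
        Real.one_rpow, inv_one, mul_one] at e1
      calc ‖P n x‖ ≤ N n (P n x) := hlow n hn _
        _ ≤ D * N n x := e1
        _ ≤ D * (C * ((n:ℝ) ^ ε) * ‖x‖) := mul_le_mul_of_nonneg_left (hup n hn x) hD.le
        _ = D * C * ((n:ℝ) ^ ε) * ‖x‖ := by ring
    have hQx : N n (x - P n x) ≤ C * ((n:ℝ) ^ ε) * (‖x‖ + D * C * ((n:ℝ) ^ ε) * ‖x‖) := by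
      refine (hup n hn _).trans ?_
      refine mul_le_mul_of_nonneg_left ((norm_sub_le x (P n x)).trans ?_)
        (mul_nonneg hC.le ht)
      linarith
    calc ‖u‖ ≤ N m u := hlow m hm u
      _ ≤ D * (((m:ℝ)/(n:ℝ)) ^ lam) * N n (coc A m n u) := h5 m n hm hmn u hu
      _ = D * (((m:ℝ)/(n:ℝ)) ^ lam) * N n (x - P n x) := by rw [hcu]
      _ ≤ D * (((m:ℝ)/(n:ℝ)) ^ lam)
          * (C * ((n:ℝ) ^ ε) * (‖x‖ + D * C * ((n:ℝ) ^ ε) * ‖x‖)) :=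
          mul_le_mul_of_nonneg_left hQx (mul_nonneg hD.le hs)
      _ ≤ D * C * (1 + D * C) * (((m:ℝ)/(n:ℝ)) ^ lam) * ((n:ℝ) ^ (2 * ε)) * ‖x‖ := by
          have e : D * (((m:ℝ)/(n:ℝ)) ^ lam)
              * (C * ((n:ℝ) ^ ε) * (‖x‖ + D * C * ((n:ℝ) ^ ε) * ‖x‖))
              = D * C * (((m:ℝ)/(n:ℝ)) ^ lam) * ((n:ℝ) ^ ε) * ‖x‖
                + D * C * (D * C) * (((m:ℝ)/(n:ℝ)) ^ lam)
                  * (((n:ℝ) ^ ε) * ((n:ℝ) ^ ε)) * ‖x‖ := by ring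
          rw [hsq n hn] at e
          have hint1 : D * C * (((m:ℝ)/(n:ℝ)) ^ lam) * ((n:ℝ) ^ ε) * ‖x‖
              ≤ D * C * (((m:ℝ)/(n:ℝ)) ^ lam) * ((n:ℝ) ^ (2 * ε)) * ‖x‖ :=
            mul_le_mul_of_nonneg_right (mul_le_mul_of_nonneg_left (hmono n hn)
              (mul_nonneg (mul_nonneg hD.le hC.le) hs)) (norm_nonneg x)
          linarith [e, hint1]
  · -- growth
    intro m n hn hnm x
    have hm : 1 ≤ m := hn.trans hnm
    have ht : (0:ℝ) ≤ (n:ℝ) ^ ε := Real.rpow_nonneg (nat_pos_real hn).le ε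
    have hr : (0:ℝ) ≤ ((m:ℝ)/(n:ℝ)) ^ a := Real.rpow_nonneg (by positivity) _
    calc ‖coc A n m x‖ ≤ N m (coc A n m x) := hlow m hm _
      _ ≤ M * (((m:ℝ)/(n:ℝ)) ^ a) * N n x := hGr m n hn hnm x
      _ ≤ M * (((m:ℝ)/(n:ℝ)) ^ a) * (C * ((n:ℝ) ^ ε) * ‖x‖) :=
          mul_le_mul_of_nonneg_left (hup n hn x) (mul_nonneg hM.le hr)
      _ ≤ M * C * (((m:ℝ)/(n:ℝ)) ^ a) * ((n:ℝ) ^ (2 * ε)) * ‖x‖ := by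
          nlinarith [mul_le_mul_of_nonneg_right (mul_le_mul_of_nonneg_left (hmono n hn)
            (mul_nonneg (mul_nonneg hM.le hC.le) hr)) (norm_nonneg x)]

end MainProof

/-- `(A_m)` admits a strong nonuniform polynomial dichotomy if and only if
it admits a polynomial dichotomy with respect to some sequence of norms `‖·‖_m` satisfying
both `‖x‖ ≤ ‖x‖_m ≤ C m^ε ‖x‖` (for some `C > 0`, `ε ≥ 0`) and the uniform polynomial
growth bound `‖𝓐(m,n)x‖_m ≤ M(m/n)^a‖x‖_n` for `m ≥ n` (for some `M, a > 0`). -/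
theorem stmt18 [CompleteSpace X] (A : ℕ → X →L[ℝ] X) :
    SNUPD A ↔
      ∃ (N : ℕ → X → ℝ) (C ε M a : ℝ), 0 < C ∧ 0 ≤ ε ∧ 0 < M ∧ 0 < a ∧
        AdaptedNorms N C ε ∧ PolyDich A N ∧ Grow A N M a := by
  exact ⟨fun h => snupd_forward h, fun h => snupd_backward h⟩
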